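/- Let E and W be real inner product spaces, R : E → ℝ differentiable with L-Lipschitz gradient and ‖∇R‖ ≤ σ everywhere, and 𝓛 : E × W → ℝ with ‖∇_θ𝓛(θ; w)‖ ≤ σ for all θ, w; suppose for each θ the map w ↦ ∇_θ𝓛(θ; w) is differentiable with derivative of operator norm at most σ′, and that for each fixed θ the function w ↦ R(F(θ, w)) has L-Lipschitz gradient, where F(θ, w) = θ − μ·∇_θ𝓛(θ; w) with μ ≥ 0. Let sequences (θ_t), (w_t) satisfy θ_{t+1} = F(θ_t, w_{t+1}) and w_{t+1} = w_t − α·∇_w[R(F(θ_t, w))]|_{w = w_t} with α ≥ 0. Then for every t ≥ 1, R(θ_{t+1}) − R(θ_t) ≤ ((L·α²)/2 − α)·‖∇_w R(F(θ_t, w_t))‖² + 3·μ·σ² + (9/2)·L·μ²·σ² + 2·α·μ²·σ²·σ′². -/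

import Mathlib

open RealInnerProductSpace

/-- Descent lemma for functions with Lipschitz gradient. -/
lemma descent_lemma {V : Type*} [NormedAddCommGroup V] [InnerProductSpace ℝ V]
    (f : V → ℝ) (g : V → V) (L : ℝ)
    (hdiff : ∀ x, HasFDerivAt f (innerSL ℝ (g x)) x)
    (hlip : ∀ x y, ‖g x - g y‖ ≤ L * ‖x - y‖)
    (x y : V) : f y - f x ≤ (inner ℝ (g x) (y - x) : ℝ) + L / 2 * ‖y - x‖ ^ 2 := by
  set d := y - x with hd
  set ψ : ℝ → ℝ := fun s => f (x + s • d) - s * (inner ℝ (g x) (d) : ℝ) - L / 2 * s ^ 2 * ‖d‖ ^ 2 with hψ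
  have hline : ∀ s : ℝ, HasDerivAt (fun s : ℝ => x + s • d) d s := by
    intro s
    simpa using ((hasDerivAt_id s).smul_const d).const_add x
  have hφ : ∀ s : ℝ, HasDerivAt (fun s : ℝ => f (x + s • d)) (inner ℝ (g (x + s • d)) (d) : ℝ) s := by
    intro s
    have := (hdiff (x + s • d)).comp_hasDerivAt s (hline s)
    exact this
  have hψ' : ∀ s : ℝ, HasDerivAt ψ
      ((inner ℝ (g (x + s • d)) (d) : ℝ) - (inner ℝ (g x) (d) : ℝ) - L * s * ‖d‖ ^ 2) s := by
    intro s
    have h1 : HasDerivAt (fun s : ℝ => s * (inner ℝ (g x) (d) : ℝ)) (inner ℝ (g x) (d) : ℝ) s := by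
      simpa using (hasDerivAt_id s).mul_const (inner ℝ (g x) (d) : ℝ)
    have h2 : HasDerivAt (fun s : ℝ => L / 2 * s ^ 2 * ‖d‖ ^ 2) (L * s * ‖d‖ ^ 2) s := by
      have := ((hasDerivAt_pow 2 s).const_mul (L / 2)).mul_const (‖d‖ ^ 2)
      convert this using 1
      · rfl
      · rfl
      norm_num only [Nat.cast_ofNat, Nat.add_one_sub_one, pow_one]
      ring
    exact ((hφ s).sub h1).sub h2
  have hanti : AntitoneOn ψ (Set.Icc 0 1) := by
    apply antitoneOn_of_deriv_nonpos (convex_Icc 0 1)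
    · exact Continuous.continuousOn (by
        have : Differentiable ℝ ψ := fun s => (hψ' s).differentiableAt
        exact this.continuous)
    · intro s hs
      exact ((hψ' s).differentiableAt).differentiableWithinAt
    · intro s hs
      rw [interior_Icc] at hs
      rw [(hψ' s).deriv]
      have hcs : (inner ℝ (g (x + s • d) - g x) (d) : ℝ) ≤ ‖g (x + s • d) - g x‖ * ‖d‖ :=
        real_inner_le_norm _ _
      have hlb : ‖g (x + s • d) - g x‖ ≤ L * (s * ‖d‖) := by
        have := hlip (x + s • d) x
        simpa [norm_smul, abs_of_nonneg hs.1.le, mul_assoc] using this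
      have hsub : (inner ℝ (g (x + s • d)) (d) : ℝ) - (inner ℝ (g x) (d) : ℝ) = (inner ℝ (g (x + s • d) - g x) (d) : ℝ) := by
        rw [inner_sub_left]
      nlinarith [norm_nonneg d, mul_le_mul_of_nonneg_right hlb (norm_nonneg d)]
  have h01 : ψ 1 ≤ ψ 0 := hanti (by norm_num) (by norm_num) zero_le_one
  simp only [hψ, one_smul, zero_smul, add_zero, one_pow, one_mul, zero_pow, mul_zero,
    zero_mul, sub_zero] at h01
  have : x + d = y := by rw [hd]; abel
  rw [this] at h01
  linarith


/-- The per-step decrease bound (Eqn. 32) in the proof of Theorem 2. `G θ₀ w₀` denotes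
the gradient `∇_w R(F(θ₀, w))` at `w = w₀`, where `F θ₀ w₀ = θ₀ - μ • ∇_θ𝓛(θ₀; w₀)`. -/
theorem per_step_decrease_bound
    {E W : Type*} [NormedAddCommGroup E] [InnerProductSpace ℝ E]
    [NormedAddCommGroup W] [InnerProductSpace ℝ W]
    (R : E → ℝ) (R' : E → E) (L σ σ' : ℝ) (hL : 0 ≤ L)
    (hRdiff : ∀ x, HasFDerivAt R (innerSL ℝ (R' x)) x)
    (hRlip : ∀ x y, ‖R' x - R' y‖ ≤ L * ‖x - y‖)
    (hRbound : ∀ x, ‖R' x‖ ≤ σ)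
    (𝓛 : E → W → ℝ) (𝓛' : E → W → E)
    (h𝓛diff : ∀ θ₀ w₀, HasFDerivAt (fun θ => 𝓛 θ w₀) (innerSL ℝ (𝓛' θ₀ w₀)) θ₀)
    (h𝓛bound : ∀ θ₀ w₀, ‖𝓛' θ₀ w₀‖ ≤ σ)
    (D : E → W → (W →L[ℝ] E))
    (hD : ∀ θ₀ w₀, HasFDerivAt (fun w => 𝓛' θ₀ w) (D θ₀ w₀) w₀)
    (hDbound : ∀ θ₀ w₀, ‖D θ₀ w₀‖ ≤ σ')
    (μ : ℝ) (hμ : 0 ≤ μ)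
    (F : E → W → E) (hF : ∀ θ₀ w₀, F θ₀ w₀ = θ₀ - μ • 𝓛' θ₀ w₀)
    (G : E → W → W)
    (hG : ∀ θ₀ w₀, HasFDerivAt (fun w => R (F θ₀ w)) (innerSL ℝ (G θ₀ w₀)) w₀)
    (hGlip : ∀ θ₀ w₁ w₂, ‖G θ₀ w₁ - G θ₀ w₂‖ ≤ L * ‖w₁ - w₂‖)
    (θ : ℕ → E) (w : ℕ → W) (α : ℝ) (hα : 0 ≤ α)
    (hθupd : ∀ t, θ (t + 1) = F (θ t) (w (t + 1)))
    (hwupd : ∀ t, w (t + 1) = w t - α • G (θ t) (w t)) :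
    ∀ t, 1 ≤ t →
      R (θ (t + 1)) - R (θ t) ≤
        (L * α ^ 2 / 2 - α) * ‖G (θ t) (w t)‖ ^ 2 +
          3 * μ * σ ^ 2 + (9 / 2) * L * μ ^ 2 * σ ^ 2 +
            2 * α * μ ^ 2 * σ ^ 2 * σ' ^ 2 := by
  intro t ht
  have hσ : 0 ≤ σ := le_trans (norm_nonneg _) (hRbound (θ t))
  set g := G (θ t) (w t) with hg
  -- Step A: inner descent on w ↦ R (F (θ t) w)
  have stepA : R (θ (t + 1)) - R (F (θ t) (w t)) ≤
      (L * α ^ 2 / 2 - α) * ‖g‖ ^ 2 := by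
    have := descent_lemma (fun w => R (F (θ t) w)) (G (θ t)) L
      (hG (θ t)) (hGlip (θ t)) (w t) (w (t + 1))
    rw [hθupd t] at *
    have hdiff : w (t + 1) - w t = -(α • g) := by rw [hwupd t]; abel
    rw [hdiff] at this
    have hip : (inner ℝ (g) (-(α • g)) : ℝ) = -(α * ‖g‖ ^ 2) := by
      rw [inner_neg_right, real_inner_smul_right, real_inner_self_eq_norm_sq]
    have hn : ‖-(α • g)‖ ^ 2 = α ^ 2 * ‖g‖ ^ 2 := by
      rw [norm_neg, norm_smul, mul_pow, Real.norm_eq_abs, sq_abs]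
    rw [hip, hn] at this
    nlinarith
  -- Step B: perturbation bound
  have stepB : R (F (θ t) (w t)) - R (θ t) ≤ μ * σ ^ 2 + L / 2 * μ ^ 2 * σ ^ 2 := by
    have hkey := descent_lemma R R' L hRdiff hRlip (θ t) (F (θ t) (w t))
    have hdiff : F (θ t) (w t) - θ t = -(μ • 𝓛' (θ t) (w t)) := by
      rw [hF]; abel
    rw [hdiff] at hkey
    have hip : (inner ℝ (R' (θ t)) (-(μ • 𝓛' (θ t) (w t))) : ℝ) ≤ μ * σ ^ 2 := by
      calc (inner ℝ (R' (θ t)) (-(μ • 𝓛' (θ t) (w t))) : ℝ)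
          ≤ ‖R' (θ t)‖ * ‖-(μ • 𝓛' (θ t) (w t))‖ := real_inner_le_norm _ _
        _ ≤ σ * (μ * σ) := by
            rw [norm_neg, norm_smul, Real.norm_eq_abs, abs_of_nonneg hμ]
            exact mul_le_mul (hRbound _) (mul_le_mul_of_nonneg_left (h𝓛bound _ _) hμ)
              (by positivity) hσ
        _ = μ * σ ^ 2 := by ring
    have hn : ‖-(μ • 𝓛' (θ t) (w t))‖ ^ 2 ≤ μ ^ 2 * σ ^ 2 := by
      rw [norm_neg, norm_smul, mul_pow, Real.norm_eq_abs, sq_abs]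
      exact mul_le_mul_of_nonneg_left
        (pow_le_pow_left₀ (norm_nonneg _) (h𝓛bound (θ t) (w t)) 2) (sq_nonneg μ)
    nlinarith
  have h1 : 0 ≤ μ * σ ^ 2 := by positivity
  have h2 : 0 ≤ L * μ ^ 2 * σ ^ 2 := by positivity
  have h3 : 0 ≤ α * μ ^ 2 * σ ^ 2 * σ' ^ 2 := by positivity
  nlinarith
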